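/- arXiv:1602.01764 — 6 statements merged into one kernel-verified Lean document; each statement's English description precedes it below -/
import Mathlib

section
/- For a feasible solution x ∈ X ⊆ {0,1}^n, the scenario c^x defined by c^x_i = c̄_i if x_i = 1 and c^x_i = c̲_i otherwise maximizes the regret Reg(x,c) = val(x,c) - min_{y∈X} val(y,c) over all scenarios c in the box U = ∏_i [c̲_i, c̄_i]. -/
open Finset

/-- the extreme scenario `c^x` (taking the upper bound on elements of `x`
and the lower bound elsewhere) maximizes the regret of `x` over the box `U`. -/
theorem worst_scenario_for_solution
    (n : ℕ) (lo hi : Fin n → ℝ) (hlohi : ∀ i, lo i ≤ hi i)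
    (X : Finset (Fin n → ℝ)) (hX : X.Nonempty)
    (hbin : ∀ x ∈ X, ∀ i, x i = 0 ∨ x i = 1)
    (val : (Fin n → ℝ) → (Fin n → ℝ) → ℝ)
    (hval : ∀ x c, val x c = ∑ i, c i * x i)
    (Reg : (Fin n → ℝ) → (Fin n → ℝ) → ℝ)
    (hReg : ∀ x c, Reg x c = val x c - X.inf' hX (fun y => val y c))
    (x : Fin n → ℝ) (hx : x ∈ X)
    (cx : Fin n → ℝ) (hcx : ∀ i, cx i = if x i = 1 then hi i else lo i) :
    (∀ i, lo i ≤ cx i ∧ cx i ≤ hi i) ∧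
    ∀ c : Fin n → ℝ, (∀ i, lo i ≤ c i ∧ c i ≤ hi i) → Reg x c ≤ Reg x cx := by
  constructor
  · intro i
    rw [hcx i]
    split <;> exact ⟨by simp [hlohi i], by simp [hlohi i]⟩
  · intro c hc
    -- choose minimizer at c
    obtain ⟨y, hy, hymin⟩ := Finset.exists_mem_eq_inf' hX (fun y => val y c)
    have key : val x c - val y c ≤ val x cx - val y cx := by
      rw [hval, hval, hval, hval, ← Finset.sum_sub_distrib, ← Finset.sum_sub_distrib]
      apply Finset.sum_le_sum
      intro i _
      have hyb := hbin y hy i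
      have hxb := hbin x hx i
      rcases hxb with hx0 | hx1
      · have hcxi : cx i = lo i := by rw [hcx i, hx0]; norm_num
        rcases hyb with h | h <;> simp [hx0, h, hcxi] <;> linarith [(hc i).1]
      · have hcxi : cx i = hi i := by rw [hcx i, hx1]; simp
        rcases hyb with h | h <;> simp [hx1, h, hcxi] <;> linarith [(hc i).2]
    have hmin_cx : X.inf' hX (fun z => val z cx) ≤ val y cx := Finset.inf'_le _ hy
    rw [hReg, hReg, hymin]
    linarith
end

section
/- Let P_X be a finitely supported probability distribution over X, t_i = ∑_{x∈X} P_X(x) x_i, and let y* ∈ X minimize ∑_i y_i (c̲_i + t_i(c̄_i - c̲_i)) over y ∈ X. Then the scenario c* defined by c*_i = c̲_i if y*_i = 1 and c̄_i otherwise maximizes the expected regret ∑_{x∈X} P_X(x) (val(x,c) - val*(c)) over all scenarios c ∈ U. -/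
open Finset

/-- best c-response to a mixed solution strategy, Mastin et al.:
if `y*` minimizes `∑_i y_i (c̲_i + t_i(c̄_i - c̲_i))` over `X`, then the scenario `c*`
(with `c*_i = c̲_i` iff `y*_i = 1`) maximizes the expected regret of `P_X` over `U`. -/
theorem best_c_response_to_mixed_solution
    (n : ℕ) (lo hi : Fin n → ℝ) (hlohi : ∀ i, lo i ≤ hi i)
    (X : Finset (Fin n → ℝ)) (hX : X.Nonempty)
    (hbin : ∀ x ∈ X, ∀ i, x i = 0 ∨ x i = 1)
    (val : (Fin n → ℝ) → (Fin n → ℝ) → ℝ)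
    (hval : ∀ x c, val x c = ∑ i, c i * x i)
    (valStar : (Fin n → ℝ) → ℝ)
    (hvalStar : ∀ c, valStar c = X.inf' hX (fun y => val y c))
    (p : (Fin n → ℝ) → ℝ) (hp : ∀ x ∈ X, 0 ≤ p x) (hp1 : ∑ x ∈ X, p x = 1)
    (t : Fin n → ℝ) (ht : ∀ i, t i = ∑ x ∈ X, p x * x i)
    (ystar : Fin n → ℝ) (hystar : ystar ∈ X)
    (hmin : ∀ y ∈ X, ∑ i, ystar i * (lo i + t i * (hi i - lo i))
                      ≤ ∑ i, y i * (lo i + t i * (hi i - lo i)))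
    (cstar : Fin n → ℝ) (hcstar : ∀ i, cstar i = if ystar i = 1 then lo i else hi i) :
    ∀ c : Fin n → ℝ, (∀ i, lo i ≤ c i ∧ c i ≤ hi i) →
      ∑ x ∈ X, p x * (val x c - valStar c)
        ≤ ∑ x ∈ X, p x * (val x cstar - valStar cstar) := by
  intro c hc
  -- bounds on t
  have ht0 : ∀ i, 0 ≤ t i := by
    intro i; rw [ht]
    refine Finset.sum_nonneg fun x hx => ?_
    rcases hbin x hx i with h | h <;> simp [h, hp x hx]
  have ht1 : ∀ i, t i ≤ 1 := by
    intro i; rw [ht, ← hp1]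
    refine Finset.sum_le_sum fun x hx => ?_
    rcases hbin x hx i with h | h <;> simp [h, hp x hx]
  -- expected value rewrite
  have sumA : ∀ d : Fin n → ℝ, ∑ x ∈ X, p x * val x d = ∑ i, d i * t i := by
    intro d
    calc ∑ x ∈ X, p x * val x d = ∑ x ∈ X, ∑ i, p x * (d i * x i) := by
          simp [hval, Finset.mul_sum]
      _ = ∑ i, ∑ x ∈ X, p x * (d i * x i) := Finset.sum_comm
      _ = ∑ i, d i * t i := by
          refine Finset.sum_congr rfl fun i _ => ?_
          rw [ht, Finset.mul_sum]
          exact Finset.sum_congr rfl fun x _ => by ring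
  have ER : ∀ d : Fin n → ℝ, ∑ x ∈ X, p x * (val x d - valStar d)
      = (∑ i, d i * t i) - valStar d := by
    intro d
    have : ∑ x ∈ X, p x * (val x d - valStar d)
        = (∑ x ∈ X, p x * val x d) - (∑ x ∈ X, p x) * valStar d := by
      rw [Finset.sum_mul, ← Finset.sum_sub_distrib]
      exact Finset.sum_congr rfl fun x _ => by ring
    rw [this, sumA, hp1, one_mul]
  rw [ER, ER]
  -- minimizer for c
  obtain ⟨yhat, hyhat, hyeq⟩ := Finset.exists_mem_eq_inf' hX (fun y => val y c)
  have hvsc : valStar c = val yhat c := by rw [hvalStar]; exact hyeq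
  -- key pointwise bound
  have key : ∀ y ∈ X, ∀ i, c i * (t i - y i)
      ≤ hi i * t i - y i * (lo i + t i * (hi i - lo i)) := by
    intro y hy i
    rcases hbin y hy i with h | h
    · simp only [h]
      have := mul_le_mul_of_nonneg_right (hc i).2 (ht0 i)
      nlinarith
    · simp only [h]
      nlinarith [(hc i).1, ht1 i]
  have eq_star : ∀ i, cstar i * (t i - ystar i)
      = hi i * t i - ystar i * (lo i + t i * (hi i - lo i)) := by
    intro i
    rcases hbin ystar hystar i with h | h
    · have hne : ystar i ≠ 1 := by rw [h]; norm_num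
      rw [hcstar, if_neg hne, h]; ring
    · rw [hcstar, if_pos h, h]; ring
  have step1 : (∑ i, c i * t i) - valStar c
      ≤ ∑ i, (hi i * t i - yhat i * (lo i + t i * (hi i - lo i))) := by
    rw [hvsc, hval, ← Finset.sum_sub_distrib]
    refine Finset.sum_le_sum fun i _ => ?_
    have := key yhat hyhat i
    nlinarith
  have step2 : ∑ i, (hi i * t i - yhat i * (lo i + t i * (hi i - lo i)))
      ≤ ∑ i, (hi i * t i - ystar i * (lo i + t i * (hi i - lo i))) := by
    rw [Finset.sum_sub_distrib, Finset.sum_sub_distrib]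
    have := hmin yhat hyhat
    linarith
  have step3 : ∑ i, (hi i * t i - ystar i * (lo i + t i * (hi i - lo i)))
      ≤ (∑ i, cstar i * t i) - valStar cstar := by
    have hvs : valStar cstar ≤ val ystar cstar := by
      rw [hvalStar]; exact Finset.inf'_le _ hystar
    have : ∑ i, (hi i * t i - ystar i * (lo i + t i * (hi i - lo i)))
        = (∑ i, cstar i * t i) - val ystar cstar := by
      rw [hval, ← Finset.sum_sub_distrib]
      refine Finset.sum_congr rfl fun i _ => ?_
      have := eq_star i; linarith [eq_star i]
    linarith
  linarith
end

section
/- In the instance with n = 2, cost intervals [5,10] and [7,12], and X = {(1,0),(0,1)}, the mixed scenario strategy playing (5,12) with probability 0.3 and (10,7) with probability 0.7 yields expected regret exactly 2.1 against both pure solutions (1,0) and (0,1); hence LB* ≥ 2.1 while LB_CG = 3/2. -/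
open Finset

/-- A finitely supported probability distribution on the box `U = ∏ [lo i, hi i]`. -/
structure FinDistOnBox (n : ℕ) (lo hi : Fin n → ℝ) where
  supp : Finset (Fin n → ℝ)
  nonempty : supp.Nonempty
  mem_box : ∀ c ∈ supp, ∀ i, lo i ≤ c i ∧ c i ≤ hi i
  w : (Fin n → ℝ) → ℝ
  w_nonneg : ∀ c ∈ supp, 0 ≤ w c
  w_sum : ∑ c ∈ supp, w c = 1

/-- in the instance with intervals `[5,10]`, `[7,12]` and
`X = {(1,0),(0,1)}`, the mixed scenario playing `(5,12)` w.p. `0.3` and `(10,7)` w.p.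
`0.7` yields expected regret exactly `2.1` against both pure solutions; hence
`LB* ≥ 2.1`, while `LB_CG = 3/2`. -/
theorem example_lbstar_gt_lbcg
    (X : Finset (Fin 2 → ℝ)) (hXdef : X = {![(1:ℝ),0], ![(0:ℝ),1]}) (hX : X.Nonempty)
    (val : (Fin 2 → ℝ) → (Fin 2 → ℝ) → ℝ)
    (hval : ∀ x c, val x c = ∑ i, c i * x i)
    (Reg : (Fin 2 → ℝ) → (Fin 2 → ℝ) → ℝ)
    (hReg : ∀ x c, Reg x c = val x c - X.inf' hX (fun y => val y c))
    (LBstar LBCG : ℝ)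
    (hLBstar : LBstar = ⨆ P : FinDistOnBox 2 ![(5:ℝ),7] ![(10:ℝ),12],
      X.inf' hX (fun x => ∑ c ∈ P.supp, P.w c * Reg x c))
    (hLBCG : LBCG = max
      (X.inf' hX (fun x => (1/2) * Reg x ![(5:ℝ),12] + (1/2) * Reg x ![(10:ℝ),7]))
      (X.inf' hX (fun x => (1/2) * Reg x ![(5:ℝ),7] + (1/2) * Reg x ![(10:ℝ),12]))) :
    (0.3 * Reg ![(1:ℝ),0] ![(5:ℝ),12] + 0.7 * Reg ![(1:ℝ),0] ![(10:ℝ),7] = 2.1) ∧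
    (0.3 * Reg ![(0:ℝ),1] ![(5:ℝ),12] + 0.7 * Reg ![(0:ℝ),1] ![(10:ℝ),7] = 2.1) ∧
    2.1 ≤ LBstar ∧ LBCG = 3/2 := by
  subst hXdef
  have hinf : ∀ f : (Fin 2 → ℝ) → ℝ,
      ({![(1:ℝ),0], ![(0:ℝ),1]} : Finset (Fin 2 → ℝ)).inf' hX f
        = min (f ![1,0]) (f ![0,1]) := by
    intro f
    simp [Finset.insert_eq_self, min_def]
  have hval' : ∀ x c : Fin 2 → ℝ, val x c = c 0 * x 0 + c 1 * x 1 := by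
    intro x c; rw [hval]; simp [Fin.sum_univ_two]
  have hReg1 : ∀ c : Fin 2 → ℝ, Reg ![1,0] c = c 0 - min (c 0) (c 1) := by
    intro c; rw [hReg, hinf]; simp [hval']
  have hReg2 : ∀ c : Fin 2 → ℝ, Reg ![0,1] c = c 1 - min (c 0) (c 1) := by
    intro c; rw [hReg, hinf]; simp [hval']
  have e1 : Reg ![1,0] ![(5:ℝ),12] = 0 := by rw [hReg1]; norm_num
  have e2 : Reg ![1,0] ![(10:ℝ),7] = 3 := by rw [hReg1]; norm_num [min_def]
  have e3 : Reg ![0,1] ![(5:ℝ),12] = 7 := by rw [hReg2]; norm_num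
  have e4 : Reg ![0,1] ![(10:ℝ),7] = 0 := by rw [hReg2]; norm_num [min_def]
  have e5 : Reg ![1,0] ![(5:ℝ),7] = 0 := by rw [hReg1]; norm_num
  have e6 : Reg ![0,1] ![(5:ℝ),7] = 2 := by rw [hReg2]; norm_num
  have e7 : Reg ![1,0] ![(10:ℝ),12] = 0 := by rw [hReg1]; norm_num
  have e8 : Reg ![0,1] ![(10:ℝ),12] = 2 := by rw [hReg2]; norm_num
  refine ⟨by rw [e1, e2]; norm_num, by rw [e3, e4]; norm_num, ?_, ?_⟩
  · -- LBstar ≥ 2.1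
    rw [hLBstar]
    have hne : (![(5:ℝ),12] : Fin 2 → ℝ) ≠ ![(10:ℝ),7] := by
      intro h; have := congrFun h 0; norm_num at this
    set P : FinDistOnBox 2 ![(5:ℝ),7] ![(10:ℝ),12] :=
      { supp := {![(5:ℝ),12], ![(10:ℝ),7]}
        nonempty := by simp
        mem_box := by
          intro c hc i
          simp [Finset.mem_insert] at hc
          rcases hc with h | h <;> subst h <;> fin_cases i <;> norm_num
        w := fun c => if c = ![(5:ℝ),12] then 0.3 else 0.7
        w_nonneg := by intro c hc; split <;> norm_num
        w_sum := by rw [Finset.sum_pair hne, if_pos rfl, if_neg (Ne.symm hne)]; norm_num }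
    have hbdd : BddAbove (Set.range fun Q : FinDistOnBox 2 ![(5:ℝ),7] ![(10:ℝ),12] =>
        ({![(1:ℝ),0], ![(0:ℝ),1]} : Finset (Fin 2 → ℝ)).inf' hX
          (fun x => ∑ c ∈ Q.supp, Q.w c * Reg x c)) := by
      refine ⟨3, ?_⟩
      rintro _ ⟨Q, rfl⟩
      dsimp only
      rw [hinf]
      refine le_trans (min_le_left _ _) ?_
      calc ∑ c ∈ Q.supp, Q.w c * Reg ![1,0] c
          ≤ ∑ c ∈ Q.supp, Q.w c * 3 := by
            refine Finset.sum_le_sum fun c hc => ?_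
            have hb := Q.mem_box c hc
            have h0 := hb 0; have h1 := hb 1
            simp at h0 h1
            refine mul_le_mul_of_nonneg_left ?_ (Q.w_nonneg c hc)
            rw [hReg1]
            rcases min_le_iff.mp (le_refl (min (c 0) (c 1))) with _ | _ <;>
              cases le_total (c 0) (c 1) with
              | inl h => rw [min_eq_left h]; linarith
              | inr h => rw [min_eq_right h]; linarith
        _ = 3 := by rw [← Finset.sum_mul, Q.w_sum, one_mul]
    refine le_trans ?_ (le_ciSup hbdd P)
    rw [hinf]
    have hs : ∑ c ∈ P.supp, P.w c * Reg ![1,0] c = 2.1 := by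
      show ∑ c ∈ ({![(5:ℝ),12], ![(10:ℝ),7]} : Finset (Fin 2 → ℝ)), _ = _
      rw [Finset.sum_pair hne]
      simp only [P]
      simp only [if_pos trivial]
      rw [if_neg (Ne.symm hne), e1, e2]; norm_num
    have hs2 : ∑ c ∈ P.supp, P.w c * Reg ![0,1] c = 2.1 := by
      show ∑ c ∈ ({![(5:ℝ),12], ![(10:ℝ),7]} : Finset (Fin 2 → ℝ)), _ = _
      rw [Finset.sum_pair hne]
      simp only [P]
      simp only [if_pos trivial]
      rw [if_neg (Ne.symm hne), e3, e4]; norm_num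
    rw [hs, hs2]; norm_num
  · rw [hLBCG, hinf, hinf, e1, e2, e3, e4, e5, e6, e7, e8]
    norm_num
end

section
/- Let x_mid minimize val(x, ĉ) over X, where ĉ_i = (c̲_i + c̄_i)/2. Then Reg(x_mid) ≤ 2·OPT, where Reg(x) = max_{c∈U}(val(x,c) - val*(c)) and OPT = min_{x∈X} Reg(x). -/
open Finset

/-- Kasperski–Zieliński: the midpoint solution is a 2-approximation for
minmax regret: `Reg(x_mid) ≤ 2·OPT`. -/
theorem midpoint_two_approximation
    (n : ℕ) (lo hi : Fin n → ℝ) (hlo : ∀ i, 0 ≤ lo i) (hlohi : ∀ i, lo i ≤ hi i)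
    (X : Finset (Fin n → ℝ)) (hX : X.Nonempty)
    (hbin : ∀ x ∈ X, ∀ i, x i = 0 ∨ x i = 1)
    (val : (Fin n → ℝ) → (Fin n → ℝ) → ℝ)
    (hval : ∀ x c, val x c = ∑ i, c i * x i)
    (MaxReg : (Fin n → ℝ) → ℝ)
    (hMaxReg : ∀ x, MaxReg x = ⨆ c : {c : Fin n → ℝ // ∀ i, lo i ≤ c i ∧ c i ≤ hi i},
      (val x c.1 - X.inf' hX (fun y => val y c.1)))
    (chat : Fin n → ℝ) (hchat : ∀ i, chat i = (lo i + hi i) / 2)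
    (xmid : Fin n → ℝ) (hxmid : xmid ∈ X)
    (hmid : ∀ y ∈ X, val xmid chat ≤ val y chat)
    (OPT : ℝ) (hOPT : OPT = X.inf' hX MaxReg) :
    MaxReg xmid ≤ 2 * OPT := by
  classical
  set S := {c : Fin n → ℝ // ∀ i, lo i ≤ c i ∧ c i ≤ hi i} with hS
  haveI hSne : Nonempty S := ⟨⟨lo, fun i => ⟨le_refl _, hlohi i⟩⟩⟩
  set F : (Fin n → ℝ) → (Fin n → ℝ) → ℝ :=
    fun x y => ∑ i, (if y i ≤ x i then hi i else lo i) * (x i - y i) with hF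
  -- boundedness of the regret function
  have hbdd : ∀ x ∈ X, BddAbove (Set.range fun c : S =>
      val x c.1 - X.inf' hX fun y => val y c.1) := by
    intro x hx
    refine ⟨∑ i, hi i, ?_⟩
    rintro _ ⟨c, rfl⟩
    dsimp only
    have h1 : val x c.1 ≤ ∑ i, hi i := by
      rw [hval]
      apply Finset.sum_le_sum
      intro i _
      rcases hbin x hx i with h | h <;> rw [h] <;>
        nlinarith [(c.2 i).1, (c.2 i).2, hlo i, hlohi i]
    have h2 : 0 ≤ X.inf' hX fun y => val y c.1 := by
      apply Finset.le_inf'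
      intro y hy
      rw [hval]
      apply Finset.sum_nonneg
      intro i _
      rcases hbin y hy i with h | h <;> rw [h] <;>
        nlinarith [(c.2 i).1, hlo i]
    linarith
  -- val difference bounded by F
  have hvalle : ∀ c : S, ∀ x ∈ X, ∀ y ∈ X, val x c.1 - val y c.1 ≤ F x y := by
    intro c x hx y hy
    rw [hval, hval, ← Finset.sum_sub_distrib, hF]
    apply Finset.sum_le_sum
    intro i _
    have h1 := (c.2 i).1
    have h2 := (c.2 i).2
    by_cases h : y i ≤ x i
    · simp only [if_pos h]; nlinarith
    · simp only [if_neg h]; push_neg at h; nlinarith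
  -- F is dominated by MaxReg
  have hFle : ∀ x ∈ X, ∀ y ∈ X, F x y ≤ MaxReg x := by
    intro x hx y hy
    have hcmem : ∀ i, lo i ≤ (if y i ≤ x i then hi i else lo i) ∧
        (if y i ≤ x i then hi i else lo i) ≤ hi i := by
      intro i
      by_cases h : y i ≤ x i <;> simp [h, hlohi i]
    set c : S := ⟨fun i => if y i ≤ x i then hi i else lo i, hcmem⟩ with hc
    have hFeq : F x y = val x c.1 - val y c.1 := by
      rw [hval, hval, ← Finset.sum_sub_distrib, hF]
      apply Finset.sum_congr rfl
      intro i _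
      ring
    have hinf : X.inf' hX (fun z => val z c.1) ≤ val y c.1 :=
      Finset.inf'_le _ hy
    rw [hMaxReg]
    have hle := le_ciSup (hbdd x hx) c
    calc F x y = val x c.1 - val y c.1 := hFeq
      _ ≤ val x c.1 - X.inf' hX (fun z => val z c.1) := by linarith
      _ ≤ _ := hle
  -- triangle inequality for F on binary vectors
  have htri : ∀ x ∈ X, ∀ z ∈ X, ∀ y ∈ X, F x y ≤ F x z + F z y := by
    intro x hx z hz y hy
    rw [hF]
    simp only
    rw [← Finset.sum_add_distrib]
    apply Finset.sum_le_sum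
    intro i _
    have h1 := hlo i
    have h2 := hlohi i
    rcases hbin x hx i with ha | ha <;> rcases hbin z hz i with hb | hb <;>
      rcases hbin y hy i with hc | hc <;> rw [ha, hb, hc] <;> norm_num <;> linarith
  -- antisymmetry-type relation via midpoint values
  have hsym : ∀ x ∈ X, ∀ y ∈ X, F x y ≤ F y x + 2 * (val x chat - val y chat) := by
    intro x hx y hy
    rw [hF, hval, hval]
    simp only
    rw [← Finset.sum_sub_distrib, Finset.mul_sum, ← Finset.sum_add_distrib]
    apply Finset.sum_le_sum
    intro i _
    have h1 := hlo i
    have h2 := hlohi i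
    have h3 := hchat i
    rcases hbin x hx i with ha | ha <;> rcases hbin y hy i with hb | hb <;>
      rw [ha, hb] <;> norm_num <;> linarith
  -- the optimal solution
  obtain ⟨xs, hxs, hxseq⟩ := Finset.exists_mem_eq_inf' hX MaxReg
  have hOPTle : OPT = MaxReg xs := by rw [hOPT, hxseq]
  -- main bound
  rw [hMaxReg]
  apply ciSup_le
  intro c
  obtain ⟨y, hy, hyeq⟩ := Finset.exists_mem_eq_inf' hX (fun z => val z c.1)
  rw [hyeq]
  have k1 : val xmid c.1 - val y c.1 ≤ F xmid y := hvalle c xmid hxmid y hy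
  have k2 : F xmid y ≤ F xmid xs + F xs y := htri xmid hxmid xs hxs y hy
  have k3 : F xmid xs ≤ F xs xmid + 2 * (val xmid chat - val xs chat) :=
    hsym xmid hxmid xs hxs
  have k4 : val xmid chat ≤ val xs chat := hmid xs hxs
  have k5 : F xs xmid ≤ MaxReg xs := hFle xs hxs xmid hxmid
  have k6 : F xs y ≤ MaxReg xs := hFle xs hxs y hy
  linarith
end

section
/- For any finitely supported distribution P_X over X inducing marginals t_i = ∑_x P_X(x) x_i, the maximum over y ∈ X of the expected regret E_{P_X}[Reg(X, ¬c^y)] equals ∑_i c̄_i t_i − min_{y∈X} ∑_i y_i (c̲_i + t_i(c̄_i − c̲_i)); moreover the maximum over all scenarios c ∈ U of E_{P_X}[Reg(X,c)] equals this same quantity. -/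
open Finset

/-- for a mixed solution strategy with marginals `t`, the maximum expected
regret over scenarios of the form `¬c^y` (for `y ∈ X`) equals
`∑_i c̄_i t_i − min_{y∈X} ∑_i y_i (c̲_i + t_i(c̄_i − c̲_i))`, and the maximum of the
expected regret over the whole box `U` equals the same quantity. -/
theorem max_expected_regret_formula
    (n : ℕ) (lo hi : Fin n → ℝ) (hlohi : ∀ i, lo i ≤ hi i)
    (X : Finset (Fin n → ℝ)) (hX : X.Nonempty)
    (hbin : ∀ x ∈ X, ∀ i, x i = 0 ∨ x i = 1)
    (val : (Fin n → ℝ) → (Fin n → ℝ) → ℝ)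
    (hval : ∀ x c, val x c = ∑ i, c i * x i)
    (Reg : (Fin n → ℝ) → (Fin n → ℝ) → ℝ)
    (hReg : ∀ x c, Reg x c = val x c - X.inf' hX (fun z => val z c))
    (p : (Fin n → ℝ) → ℝ) (hp : ∀ x ∈ X, 0 ≤ p x) (hp1 : ∑ x ∈ X, p x = 1)
    (t : Fin n → ℝ) (ht : ∀ i, t i = ∑ x ∈ X, p x * x i)
    (neg : (Fin n → ℝ) → (Fin n → ℝ))
    (hneg : ∀ y i, neg y i = if y i = 1 then lo i else hi i)
    (Q : ℝ)
    (hQ : Q = ∑ i, hi i * t i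
      - X.inf' hX (fun y => ∑ i, y i * (lo i + t i * (hi i - lo i)))) :
    X.sup' hX (fun y => ∑ x ∈ X, p x * Reg x (neg y)) = Q ∧
    (⨆ c : {c : Fin n → ℝ // ∀ i, lo i ≤ c i ∧ c i ≤ hi i},
      ∑ x ∈ X, p x * Reg x c.1) = Q := by
  -- marginal bounds
  have ht0 : ∀ i, 0 ≤ t i := by
    intro i; rw [ht]
    refine Finset.sum_nonneg fun x hx => mul_nonneg (hp x hx) ?_
    rcases hbin x hx i with h | h <;> simp [h]
  have ht1 : ∀ i, t i ≤ 1 := by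
    intro i; rw [ht, ← hp1]
    refine Finset.sum_le_sum fun x hx => ?_
    rcases hbin x hx i with h | h <;> simp [h, hp x hx]
  -- the expected value formula
  have hval' : ∀ c, (fun z => val z c) = fun z => ∑ i, c i * z i := by
    intro c; funext z; exact hval z c
  have hF : ∀ c, ∑ x ∈ X, p x * Reg x c
      = (∑ i, c i * t i) - X.inf' hX (fun z => ∑ i, c i * z i) := by
    intro c
    have h1 : ∑ x ∈ X, p x * Reg x c
        = ∑ x ∈ X, (p x * val x c - p x * X.inf' hX (fun z => val z c)) := by
      refine Finset.sum_congr rfl fun x hx => ?_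
      rw [hReg]; ring
    rw [h1, Finset.sum_sub_distrib, ← Finset.sum_mul, hp1, one_mul, hval' c]
    congr 1
    have h2 : ∀ x ∈ X, p x * val x c = ∑ i, c i * (p x * x i) := by
      intro x _; rw [hval, Finset.mul_sum]
      exact Finset.sum_congr rfl fun i _ => by ring
    rw [Finset.sum_congr rfl h2, Finset.sum_comm]
    refine Finset.sum_congr rfl fun i _ => ?_
    rw [← Finset.mul_sum, ht]
  set G : (Fin n → ℝ) → ℝ := fun y => ∑ i, y i * (lo i + t i * (hi i - lo i)) with hG
  -- neg y paired with t
  have hnegt : ∀ y ∈ X, ∑ i, neg y i * t i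
      = (∑ i, hi i * t i) - ∑ i, y i * (t i * (hi i - lo i)) := by
    intro y hy
    rw [← Finset.sum_sub_distrib]
    refine Finset.sum_congr rfl fun i _ => ?_
    rcases hbin y hy i with h | h <;> simp [hneg, h] <;> ring
  -- neg y paired with y itself
  have hnegy : ∀ y ∈ X, ∑ i, neg y i * y i = ∑ i, y i * lo i := by
    intro y hy
    refine Finset.sum_congr rfl fun i _ => ?_
    rcases hbin y hy i with h | h <;> simp [hneg, h]
  -- key coordinate inequality for upper bound over y scenarios
  have hcoord : ∀ y ∈ X, ∀ z ∈ X, ∀ i,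
      z i * (lo i + t i * (hi i - lo i)) ≤ y i * (t i * (hi i - lo i)) + neg y i * z i := by
    intro y hy z hz i
    have hd := hlohi i
    have h0 := ht0 i; have h1 := ht1 i
    rcases hbin y hy i with h | h <;> rcases hbin z hz i with h' | h' <;>
      simp [hneg, h, h'] <;> nlinarith
  -- upper bound: every F (neg y) ≤ Q
  have hub : ∀ y ∈ X, ∑ x ∈ X, p x * Reg x (neg y) ≤ Q := by
    intro y hy
    rw [hF, hQ]
    obtain ⟨z, hz, hzeq⟩ := Finset.exists_mem_eq_inf' hX (fun z => ∑ i, neg y i * z i)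
    rw [hzeq, hnegt y hy]
    have hGz : X.inf' hX G ≤ G z := Finset.inf'_le _ hz
    have hkey : G z ≤ (∑ i, y i * (t i * (hi i - lo i))) + ∑ i, neg y i * z i := by
      rw [← Finset.sum_add_distrib]
      exact Finset.sum_le_sum fun i _ => hcoord y hy z hz i
    linarith
  -- lower bound: Q is attained
  obtain ⟨y₀, hy₀, hy₀eq⟩ := Finset.exists_mem_eq_inf' hX G
  have hlb : Q ≤ ∑ x ∈ X, p x * Reg x (neg y₀) := by
    rw [hF, hQ, hy₀eq, hnegt y₀ hy₀]
    have h1 : X.inf' hX (fun z => ∑ i, neg y₀ i * z i) ≤ ∑ i, neg y₀ i * y₀ i :=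
      Finset.inf'_le _ hy₀
    rw [hnegy y₀ hy₀] at h1
    have h2 : G y₀ = (∑ i, y₀ i * lo i) + ∑ i, y₀ i * (t i * (hi i - lo i)) := by
      rw [hG, ← Finset.sum_add_distrib]
      exact Finset.sum_congr rfl fun i _ => by ring
    linarith
  have part1 : X.sup' hX (fun y => ∑ x ∈ X, p x * Reg x (neg y)) = Q := by
    refine le_antisymm (Finset.sup'_le _ _ hub) ?_
    exact le_trans hlb (Finset.le_sup' (fun y => ∑ x ∈ X, p x * Reg x (neg y)) hy₀)
  refine ⟨part1, ?_⟩
  -- part 2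
  have hnegmem : ∀ y ∈ X, ∀ i, lo i ≤ neg y i ∧ neg y i ≤ hi i := by
    intro y hy i
    rcases hbin y hy i with h | h <;> simp [hneg, h, hlohi i]
  have hub2 : ∀ c : {c : Fin n → ℝ // ∀ i, lo i ≤ c i ∧ c i ≤ hi i},
      ∑ x ∈ X, p x * Reg x c.1 ≤ Q := by
    rintro ⟨c, hc⟩
    obtain ⟨z, hz, hzeq⟩ := Finset.exists_mem_eq_inf' hX (fun w => ∑ i, c i * w i)
    have step : ∑ x ∈ X, p x * Reg x c ≤ ∑ x ∈ X, p x * Reg x (neg z) := by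
      rw [hF, hF, hzeq]
      have h1 : X.inf' hX (fun w => ∑ i, neg z i * w i) ≤ ∑ i, neg z i * z i :=
        Finset.inf'_le _ hz
      have h2 : (∑ i, c i * t i) - ∑ i, c i * z i ≤ (∑ i, neg z i * t i) - ∑ i, neg z i * z i := by
        rw [← Finset.sum_sub_distrib, ← Finset.sum_sub_distrib]
        refine Finset.sum_le_sum fun i _ => ?_
        have hd := hlohi i
        have h0 := ht0 i; have h1 := ht1 i
        have hci := hc i
        rcases hbin z hz i with h | h <;> simp [hneg, h] <;> nlinarith [hci.1, hci.2]
      linarith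
    exact le_trans step (hub z hz)
  have hne : Nonempty {c : Fin n → ℝ // ∀ i, lo i ≤ c i ∧ c i ≤ hi i} :=
    ⟨⟨neg y₀, hnegmem y₀ hy₀⟩⟩
  refine le_antisymm (ciSup_le hub2) ?_
  have hbdd : BddAbove (Set.range fun c : {c : Fin n → ℝ // ∀ i, lo i ≤ c i ∧ c i ≤ hi i} =>
      ∑ x ∈ X, p x * Reg x c.1) := ⟨Q, by rintro _ ⟨c, rfl⟩; exact hub2 c⟩
  exact le_trans hlb (le_ciSup hbdd ⟨neg y₀, hnegmem y₀ hy₀⟩)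
end

section
/- For all x ∈ X and all finitely supported distributions P_X over X with marginals y_i = ∑_{z∈X} P_X(z) z_i, the expected regret of x against the mixed scenario strategy P_U defined by P_U(¬c^z) = P_X(z) satisfies E_{P_U}[val(x,C)] − E_{P_U}[val*(C)] ≥ ∑_i x_i(c̲_i y_i + (1 − y_i) c̄_i) − ∑_i c̲_i y_i, with equality when each z in the support of P_X is optimal in scenario ¬c^z. -/
open Finset

/-- the expected regret of a pure solution `x` against the scenario mixed
strategy `P_U(¬c^z) = P_X(z)` is at least
`∑_i x_i(c̲_i y_i + (1−y_i)c̄_i) − ∑_i c̲_i y_i`, with equality when every `z` in the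
support of `P_X` is optimal in scenario `¬c^z`. -/
theorem expected_regret_against_induced_scenario_strategy
    (n : ℕ) (lo hi : Fin n → ℝ) (hlohi : ∀ i, lo i ≤ hi i)
    (X : Finset (Fin n → ℝ)) (hX : X.Nonempty)
    (hbin : ∀ x ∈ X, ∀ i, x i = 0 ∨ x i = 1)
    (val : (Fin n → ℝ) → (Fin n → ℝ) → ℝ)
    (hval : ∀ x c, val x c = ∑ i, c i * x i)
    (valStar : (Fin n → ℝ) → ℝ)
    (hvalStar : ∀ c, valStar c = X.inf' hX (fun z => val z c))
    (p : (Fin n → ℝ) → ℝ) (hp : ∀ z ∈ X, 0 ≤ p z) (hp1 : ∑ z ∈ X, p z = 1)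
    (y : Fin n → ℝ) (hy : ∀ i, y i = ∑ z ∈ X, p z * z i)
    (neg : (Fin n → ℝ) → (Fin n → ℝ))
    (hneg : ∀ z i, neg z i = if z i = 1 then lo i else hi i)
    (x : Fin n → ℝ) (hx : x ∈ X) :
    (∑ z ∈ X, p z * (val x (neg z) - valStar (neg z))
      ≥ ∑ i, x i * (lo i * y i + (1 - y i) * hi i) - ∑ i, lo i * y i) ∧
    ((∀ z ∈ X, p z ≠ 0 → val z (neg z) = valStar (neg z)) →
      ∑ z ∈ X, p z * (val x (neg z) - valStar (neg z))
        = ∑ i, x i * (lo i * y i + (1 - y i) * hi i) - ∑ i, lo i * y i) := by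
  -- A: expected value of x
  have hA : ∑ z ∈ X, p z * val x (neg z)
      = ∑ i, x i * (lo i * y i + (1 - y i) * hi i) := by
    calc ∑ z ∈ X, p z * val x (neg z)
        = ∑ z ∈ X, ∑ i, p z * (neg z i * x i) := by
          refine Finset.sum_congr rfl fun z hz => ?_
          rw [hval, Finset.mul_sum]
      _ = ∑ i, ∑ z ∈ X, p z * (neg z i * x i) := Finset.sum_comm
      _ = ∑ i, x i * (lo i * y i + (1 - y i) * hi i) := by
          refine Finset.sum_congr rfl fun i _ => ?_
          have hkey : ∀ z ∈ X, p z * (neg z i * x i)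
              = x i * (lo i * (p z * z i) + (p z - p z * z i) * hi i) := by
            intro z hz
            rcases hbin z hz i with h | h <;> rw [hneg] <;> simp [h] <;> ring
          rw [Finset.sum_congr rfl hkey, ← Finset.mul_sum]
          congr 1
          rw [Finset.sum_add_distrib, ← Finset.mul_sum, ← Finset.sum_mul,
            Finset.sum_sub_distrib, hp1, ← hy]
  -- val z (neg z) = ∑ lo i * z i
  have hBz : ∀ z ∈ X, val z (neg z) = ∑ i, lo i * z i := by
    intro z hz
    rw [hval]
    refine Finset.sum_congr rfl fun i _ => ?_
    rcases hbin z hz i with h | h <;> rw [hneg] <;> simp [h]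
  have hB : ∑ z ∈ X, p z * val z (neg z) = ∑ i, lo i * y i := by
    calc ∑ z ∈ X, p z * val z (neg z)
        = ∑ z ∈ X, ∑ i, p z * (lo i * z i) := by
          refine Finset.sum_congr rfl fun z hz => ?_
          rw [hBz z hz, Finset.mul_sum]
      _ = ∑ i, lo i * y i := by
          rw [Finset.sum_comm]
          refine Finset.sum_congr rfl fun i _ => ?_
          rw [hy, Finset.mul_sum]
          exact Finset.sum_congr rfl fun z _ => by ring
  have hsplit : ∑ z ∈ X, p z * (val x (neg z) - valStar (neg z))
      = (∑ z ∈ X, p z * val x (neg z)) - ∑ z ∈ X, p z * valStar (neg z) := by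
    rw [← Finset.sum_sub_distrib]
    exact Finset.sum_congr rfl fun z _ => by ring
  have hle : ∀ z ∈ X, valStar (neg z) ≤ val z (neg z) := by
    intro z hz
    rw [hvalStar]
    exact Finset.inf'_le _ hz
  constructor
  · have : ∑ z ∈ X, p z * valStar (neg z) ≤ ∑ z ∈ X, p z * val z (neg z) :=
      Finset.sum_le_sum fun z hz => mul_le_mul_of_nonneg_left (hle z hz) (hp z hz)
    rw [ge_iff_le, ← hA, hsplit, ← hB]
    linarith
  · intro heq
    have : ∑ z ∈ X, p z * valStar (neg z) = ∑ z ∈ X, p z * val z (neg z) := by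
      refine Finset.sum_congr rfl fun z hz => ?_
      by_cases hpz : p z = 0
      · simp [hpz]
      · rw [heq z hz hpz]
    rw [hsplit, hA, this, hB]
end
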